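/- Let λ > 0 and let q : ℝ → Quaternion ℝ be differentiable with ‖q(t)‖ = 1 for all t and satisfy q'(t) = (1/2) · q(t) * ⟦−λ · sgn₊(q°(t)) · q⃗(t)⟧. Then the function V(t) = ‖q⃗(t)‖² is differentiable with V'(t) = −λ · |q°(t)| · ‖q⃗(t)‖² for all t. -/

import Mathlib

noncomputable section

/-- `sgn₊ x = 1` if `x ≥ 0` and `-1` if `x < 0`. -/
def sgnPlus (x : ℝ) : ℝ := if 0 ≤ x then 1 else -1

/-- The vector (imaginary) part of a quaternion, as a vector in Euclidean `ℝ³`. -/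
def vecPart (p : Quaternion ℝ) : EuclideanSpace ℝ (Fin 3) := WithLp.toLp 2 ![p.imI, p.imJ, p.imK]

/-- The pure-imaginary quaternion `⟦v⟧` with vector part `v`. -/
def quatOfVec (v : EuclideanSpace ℝ (Fin 3)) : Quaternion ℝ := ⟨0, v 0, v 1, v 2⟩

/-- `re` as a continuous linear map on quaternions. -/
def reCLM : Quaternion ℝ →L[ℝ] ℝ := ⟨QuaternionAlgebra.reₗ _ _ _, Quaternion.continuous_re⟩
def imICLM : Quaternion ℝ →L[ℝ] ℝ := ⟨QuaternionAlgebra.imIₗ _ _ _, Quaternion.continuous_imI⟩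
def imJCLM : Quaternion ℝ →L[ℝ] ℝ := ⟨QuaternionAlgebra.imJₗ _ _ _, Quaternion.continuous_imJ⟩
def imKCLM : Quaternion ℝ →L[ℝ] ℝ := ⟨QuaternionAlgebra.imKₗ _ _ _, Quaternion.continuous_imK⟩

lemma norm_sq_vecPart (p : Quaternion ℝ) :
    ‖vecPart p‖ ^ 2 = p.imI ^ 2 + p.imJ ^ 2 + p.imK ^ 2 := by
  rw [EuclideanSpace.norm_eq, Real.sq_sqrt (by positivity)]
  simp [vecPart, Fin.sum_univ_three, sq_abs]

theorem lyapunov_identity_sliding_surface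
    (lam : ℝ) (hlam : 0 < lam) (q : ℝ → Quaternion ℝ)
    (hq : Differentiable ℝ q)
    (hunit : ∀ t : ℝ, ‖q t‖ = 1)
    (hdyn : ∀ t : ℝ, deriv q t =
      (1 / 2 : ℝ) • (q t * quatOfVec ((-(lam * sgnPlus (q t).re)) • vecPart (q t)))) :
    ∀ t : ℝ, HasDerivAt (fun τ => ‖vecPart (q τ)‖ ^ 2)
      (-(lam * |(q t).re| * ‖vecPart (q t)‖ ^ 2)) t := by
  intro t
  set c : ℝ := -(lam * sgnPlus (q t).re) with hc
  have hq' : HasDerivAt q (deriv q t) t := (hq t).hasDerivAt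
  have hI : HasDerivAt (fun τ => (q τ).imI) ((deriv q t).imI) t :=
    (imICLM.hasFDerivAt.comp_hasDerivAt t hq')
  have hJ : HasDerivAt (fun τ => (q τ).imJ) ((deriv q t).imJ) t :=
    (imJCLM.hasFDerivAt.comp_hasDerivAt t hq')
  have hK : HasDerivAt (fun τ => (q τ).imK) ((deriv q t).imK) t :=
    (imKCLM.hasFDerivAt.comp_hasDerivAt t hq')
  -- compute the components of the derivative
  have hd := hdyn t
  have hIval : (deriv q t).imI = (1/2) * (c * (q t).re * (q t).imI) := by
    rw [hd]; simp [Quaternion.imI_mul, hc]; simp [quatOfVec, vecPart]; ring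
  have hJval : (deriv q t).imJ = (1/2) * (c * (q t).re * (q t).imJ) := by
    rw [hd]; simp [Quaternion.imJ_mul, hc]; simp [quatOfVec, vecPart]; ring
  have hKval : (deriv q t).imK = (1/2) * (c * (q t).re * (q t).imK) := by
    rw [hd]; simp [Quaternion.imK_mul, hc]; simp [quatOfVec, vecPart]; ring
  have hV : HasDerivAt (fun τ => (q τ).imI ^ 2 + (q τ).imJ ^ 2 + (q τ).imK ^ 2)
      (-(lam * |(q t).re| * ‖vecPart (q t)‖ ^ 2)) t := by
    have := ((hI.fun_pow 2).fun_add (hJ.fun_pow 2)).fun_add (hK.fun_pow 2)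
    refine this.congr_deriv ?_
    rw [hIval, hJval, hKval, norm_sq_vecPart]
    have hs : c * (q t).re = -(lam * |(q t).re|) := by
      rw [hc, sgnPlus]
      rcases le_or_gt 0 (q t).re with h | h
      · rw [if_pos h, abs_of_nonneg h]; ring
      · rw [if_neg (not_le.mpr h), abs_of_neg h]; ring
    rw [hs]; ring
  exact hV.congr_of_eventuallyEq (Filter.Eventually.of_forall fun τ => norm_sq_vecPart (q τ))
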